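/- With a(g₁,g₂) = ζ₈^{3(g₁² − g₂²)} on ℤ/4ℤ × ℤ/4ℤ, the Gauss sum ∑_{x ∈ ℤ/4ℤ × ℤ/4ℤ} a(x) equals 4. -/

import Mathlib

/-- The quadratic form `a(g₁,g₂) = ζ₈^(3(g₁² - g₂²))` on `ℤ/4 × ℤ/4`,
where `ζ₈ = exp(2πi/8)`. -/
noncomputable def quadA (x : ZMod 4 × ZMod 4) : ℂ :=
  Complex.exp (2 * Real.pi * Complex.I / 8) ^ (3 * ((x.1.val : ℤ) ^ 2 - (x.2.val : ℤ) ^ 2))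

theorem quadA_gauss_sum : ∑ x : ZMod 4 × ZMod 4, quadA x = 4 := by
  set z := Complex.exp (2 * Real.pi * Complex.I / 8) with hzdef
  have hz : z ≠ 0 := Complex.exp_ne_zero _
  have h4 : z ^ 4 = -1 := by
    rw [hzdef, ← Complex.exp_nat_mul]
    rw [show (4:ℕ) * (2 * Real.pi * Complex.I / 8) = Real.pi * Complex.I by ring]
    exact Complex.exp_pi_mul_I
  have h8 : z ^ (8:ℤ) = 1 := by
    rw [show (8:ℤ) = ((8:ℕ):ℤ) by norm_num, zpow_natCast, show (8:ℕ) = 4*2 by norm_num,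
      pow_mul, h4]; ring
  have hred : ∀ (q : ℤ) (r : ℕ), z ^ (8*q + (r:ℤ)) = z ^ r := by
    intro q r
    rw [zpow_add₀ hz, zpow_mul, h8, one_zpow, one_mul, zpow_natCast]
  rw [Fintype.sum_prod_type]
  rw [show (Finset.univ : Finset (ZMod 4)) = {0,1,2,3} by decide]
  simp (config := { decide := true }) only [Finset.sum_insert, Finset.mem_insert,
    Finset.mem_singleton, Finset.sum_singleton, not_or, quadA,
    show ZMod.val (0 : ZMod 4) = 0 from rfl, show ZMod.val (1 : ZMod 4) = 1 from rfl,
    show ZMod.val (2 : ZMod 4) = 2 from rfl, show ZMod.val (3 : ZMod 4) = 3 from rfl]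
  norm_num [← hzdef]
  have hp : ∀ n : ℤ, z ^ (8*n) = 1 := fun n => by rw [zpow_mul, h8, one_zpow]
  have hinv : ∀ a b k : ℤ, a + b = 8*k → (z ^ a)⁻¹ = z ^ b := by
    intro a b k hk
    exact inv_eq_of_mul_eq_one_left (by rw [← zpow_add₀ hz, show b + a = 8*k by omega, hp])
  simp only [← zpow_natCast, Nat.cast_ofNat]
  rw [hinv 3 5 1 (by norm_num), hinv 12 4 2 (by norm_num), hinv 27 5 4 (by norm_num),
    hinv 9 7 2 (by norm_num), hinv 24 0 3 (by norm_num), hinv 15 1 2 (by norm_num)]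
  norm_cast
  linear_combination (1 + z + z^3 + z^5 + z^12 + z^15 - z^16 - z^19 + z^20 + z^23) * h4
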